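/- Let Γ be a finite connected simple graph, viewed as a subgraph of its extension graph Γ^e. Then for all vertices x, y of Γ and all group elements g, h ∈ A(Γ), the distance in Γ between x and y is at most the distance in Γ^e between x^g and y^h. In particular, a geodesic path lying in Γ is also a geodesic in Γ^e. -/

import Mathlib

/-- The commutation relations defining the right-angled Artin group of a graph `Γ`. -/
def raagRels {V : Type*} (Γ : SimpleGraph V) : Set (FreeGroup V) :=
  {w | ∃ u v : V, Γ.Adj u v ∧
    w = FreeGroup.of u * FreeGroup.of v * (FreeGroup.of u)⁻¹ * (FreeGroup.of v)⁻¹}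

/-- The right-angled Artin group `A(Γ)` of a graph `Γ`. -/
abbrev Raag {V : Type*} (Γ : SimpleGraph V) := PresentedGroup (raagRels Γ)

/-- The generator of `A(Γ)` corresponding to a vertex `v`. -/
def raagGen {V : Type*} (Γ : SimpleGraph V) (v : V) : Raag Γ := PresentedGroup.of v

/-- The vertex set of the extension graph `Γ^e`: all conjugates `v^g = g⁻¹ v g` of vertex
generators in `A(Γ)`. -/
def extVerts {V : Type*} (Γ : SimpleGraph V) : Set (Raag Γ) :=
  {a | ∃ (v : V) (g : Raag Γ), a = g⁻¹ * raagGen Γ v * g}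

/-- The extension graph `Γ^e`: two distinct conjugates of vertex generators are adjacent iff they
commute in `A(Γ)`. -/
def extGraph {V : Type*} (Γ : SimpleGraph V) : SimpleGraph (extVerts Γ) where
  Adj x y := x ≠ y ∧ Commute (x : Raag Γ) (y : Raag Γ)
  symm := by constructor; rintro x y ⟨h1, h2⟩; exact ⟨h1.symm, h2.symm⟩
  loopless := by constructor; rintro x ⟨h1, _⟩; exact h1 rfl

/-- In `S₃`, no conjugate of the transposition `(0 1)` commutes with a conjugate of the
`3`-cycle.  This is the key computation behind the fact that conjugates of non-adjacent
generators of a RAAG never commute. -/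
lemma s3key : ∀ G H : Equiv.Perm (Fin 3),
    ¬ ((G⁻¹ * Equiv.swap 0 1 * G) * (H⁻¹ * finRotate 3 * H)
        = (H⁻¹ * finRotate 3 * H) * (G⁻¹ * Equiv.swap 0 1 * G)) := by decide

section lemmas
variable {V : Type*} (Γ : SimpleGraph V)

/-- The generators of adjacent vertices commute in `A(Γ)`. -/
lemma raagGen_commute {u v : V} (h : Γ.Adj u v) : Commute (raagGen Γ u) (raagGen Γ v) := by
  have h1 : (PresentedGroup.mk (raagRels Γ))
      (FreeGroup.of u * FreeGroup.of v * (FreeGroup.of u)⁻¹ * (FreeGroup.of v)⁻¹) = 1 := by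
    rw [PresentedGroup.mk_eq_one_iff]
    exact Subgroup.subset_normalClosure ⟨u, v, h, rfl⟩
  simp only [map_mul, map_inv] at h1
  have h2 : raagGen Γ u * raagGen Γ v * (raagGen Γ u)⁻¹ = raagGen Γ v := by
    rwa [mul_inv_eq_one] at h1
  rw [mul_inv_eq_iff_eq_mul] at h2
  exact h2

/-- The abelianization map of `A(Γ)`. -/
noncomputable def abHom : Raag Γ →* Multiplicative (V →₀ ℤ) :=
  PresentedGroup.toGroup (f := fun v => Multiplicative.ofAdd (Finsupp.single v 1)) (by
    rintro r ⟨u, v, -, rfl⟩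
    simp only [map_mul, map_inv, FreeGroup.lift_apply_of]
    rw [mul_inv_eq_one, mul_inv_eq_iff_eq_mul, mul_comm])

/-- A vertex generator remembers its vertex, even after conjugation. -/
lemma conj_gen_inj {u v : V} {g h : Raag Γ}
    (e : g⁻¹ * raagGen Γ u * g = h⁻¹ * raagGen Γ v * h) : u = v := by
  have h1 := congrArg (abHom Γ) e
  simp only [map_mul, map_inv] at h1
  have key : ∀ (a b : Multiplicative (V →₀ ℤ)), a⁻¹ * b * a = b := fun a b => by
    rw [mul_comm a⁻¹ b, mul_assoc, inv_mul_cancel, mul_one]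
  rw [key, key] at h1
  have h2 : abHom Γ (raagGen Γ u) = Multiplicative.ofAdd (Finsupp.single u 1) :=
    PresentedGroup.toGroup.of _
  have h3 : abHom Γ (raagGen Γ v) = Multiplicative.ofAdd (Finsupp.single v 1) :=
    PresentedGroup.toGroup.of _
  rw [h2, h3] at h1
  have h4 : (Finsupp.single u (1:ℤ)) = Finsupp.single v 1 := by
    exact_mod_cast h1
  rcases (Finsupp.single_eq_single_iff _ _ _ _).mp h4 with ⟨h5, -⟩ | ⟨h5, -⟩
  · exact h5
  · norm_num at h5

/-- The vertex generators are pairwise distinct. -/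
lemma gen_inj {u v : V} (e : raagGen Γ u = raagGen Γ v) : u = v :=
  conj_gen_inj Γ (g := 1) (h := 1) (by simp [e])

/-- If conjugates of the generators of two distinct vertices commute, the vertices are
adjacent.  Proved by mapping `A(Γ)` onto `S₃`, sending `u` to a transposition, `v` to a
`3`-cycle and every other generator to `1`. -/
lemma adj_of_commute_conj {u v : V} (huv : u ≠ v) {g h : Raag Γ}
    (hc : Commute (g⁻¹ * raagGen Γ u * g) (h⁻¹ * raagGen Γ v * h)) : Γ.Adj u v := by
  classical
  by_contra hadj
  set f : V → Equiv.Perm (Fin 3) :=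
    fun w => if w = u then Equiv.swap 0 1 else if w = v then finRotate 3 else 1 with hf
  have hrel : ∀ r ∈ raagRels Γ, FreeGroup.lift f r = 1 := by
    rintro r ⟨a, b, hab, rfl⟩
    simp only [map_mul, map_inv, FreeGroup.lift_apply_of]
    have hcomm : Commute (f a) (f b) := by
      rcases (by by_cases hau : a = u
                 · by_cases hbu : b = u
                   · exact Or.inr (Or.inr (by rw [hau, hbu]))
                   · by_cases hbv : b = v
                     · exact absurd (hau ▸ hbv ▸ hab) hadj
                     · exact Or.inr (Or.inl (by simp [hf, hbu, hbv]))
                 · by_cases hav : a = v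
                   · by_cases hbu : b = u
                     · exact absurd (hav ▸ hbu ▸ hab).symm hadj
                     · by_cases hbv : b = v
                       · exact Or.inr (Or.inr (by rw [hav, hbv]))
                       · exact Or.inr (Or.inl (by simp [hf, hbu, hbv]))
                   · exact Or.inl (by simp [hf, hau, hav]) :
          f a = 1 ∨ f b = 1 ∨ f a = f b) with h1 | h1 | h1
      · rw [h1]; exact Commute.one_left _
      · rw [h1]; exact Commute.one_right _
      · rw [h1]
    rw [mul_inv_eq_one, mul_inv_eq_iff_eq_mul]
    exact hcomm.eq
  have hmap := hc.map (PresentedGroup.toGroup hrel)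
  simp only [map_mul, map_inv] at hmap
  have hfu : (PresentedGroup.toGroup hrel) (raagGen Γ u) = Equiv.swap 0 1 := by
    rw [show raagGen Γ u = PresentedGroup.of u from rfl, PresentedGroup.toGroup.of]
    simp [hf]
  have hfv : (PresentedGroup.toGroup hrel) (raagGen Γ v) = finRotate 3 := by
    rw [show raagGen Γ v = PresentedGroup.of v from rfl, PresentedGroup.toGroup.of]
    simp [hf, huv.symm]
  rw [hfu, hfv] at hmap
  exact s3key _ _ hmap.eq

/-- The vertex `v^g` of the extension graph. -/
def ev (v : V) (g : Raag Γ) : extVerts Γ := ⟨g⁻¹ * raagGen Γ v * g, v, g, rfl⟩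

/-- The vertex `v` of `Γ`, viewed as a vertex of the extension graph. -/
def evo (v : V) : extVerts Γ := ⟨raagGen Γ v, v, 1, by simp⟩

lemma ev_adj {v w : V} (hvw : Γ.Adj v w) (g : Raag Γ) :
    (extGraph Γ).Adj (ev Γ v g) (ev Γ w g) := by
  constructor
  · intro e
    have e1 : g⁻¹ * raagGen Γ v * g = g⁻¹ * raagGen Γ w * g := congrArg Subtype.val e
    exact Γ.ne_of_adj hvw (gen_inj Γ (mul_left_cancel (mul_right_cancel e1)))
  · have hc := raagGen_commute Γ hvw
    have h2 := hc.map (MulAut.conj g⁻¹).toMonoidHom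
    simpa [MulAut.conj_apply, ev] using h2

lemma evo_adj {v w : V} (hvw : Γ.Adj v w) : (extGraph Γ).Adj (evo Γ v) (evo Γ w) := by
  constructor
  · intro e
    exact Γ.ne_of_adj hvw (gen_inj Γ (congrArg Subtype.val e))
  · exact raagGen_commute Γ hvw

/-- Conjugation by a fixed element, as a graph homomorphism of the extension graph. -/
def conjHom (k : Raag Γ) : extGraph Γ →g extGraph Γ where
  toFun a := ⟨k⁻¹ * a * k, by
    obtain ⟨v, g, hg⟩ := a.2
    exact ⟨v, g * k, by rw [hg]; group⟩⟩
  map_rel' := by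
    rintro a b ⟨hne, hc⟩
    refine ⟨fun e => hne ?_, ?_⟩
    · have e1 : k⁻¹ * (a : Raag Γ) * k = k⁻¹ * (b : Raag Γ) * k := congrArg Subtype.val e
      exact Subtype.ext (mul_left_cancel (mul_right_cancel e1))
    · have h2 := hc.map (MulAut.conj k⁻¹).toMonoidHom
      simpa [MulAut.conj_apply] using h2

lemma conjHom_val (k : Raag Γ) (a : extVerts Γ) :
    ((conjHom Γ k a : extVerts Γ) : Raag Γ) = k⁻¹ * a * k := rfl

/-- `v^s` is connected to `v` in the extension graph, for a generator `s`; by induction on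
the distance from `v` to `s` in `Γ`. -/
lemma reach_single (hconn : Γ.Connected) :
    ∀ n (v s : V), Γ.dist v s ≤ n →
      (extGraph Γ).Reachable (ev Γ v (raagGen Γ s)) (evo Γ v) := by
  intro n
  induction n with
  | zero =>
    intro v s hd
    have hvs : v = s := hconn.dist_eq_zero_iff.mp (Nat.le_zero.mp hd)
    subst hvs
    have he : ev Γ v (raagGen Γ v) = evo Γ v := Subtype.ext (by simp [ev, evo])
    rw [he]
  | succ n ih =>
    intro v s hd
    rcases Nat.lt_or_ge (Γ.dist v s) (n+1) with hlt | hge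
    · exact ih v s (Nat.lt_succ_iff.mp hlt)
    · have hd' : Γ.dist v s = n + 1 := le_antisymm hd hge
      match n, ih, hd' with
      | 0, ih, hd' =>
        have hadj : Γ.Adj v s := SimpleGraph.dist_eq_one_iff_adj.mp hd'
        have hc := raagGen_commute Γ hadj
        have he : ev Γ v (raagGen Γ s) = evo Γ v := Subtype.ext (by
          show (raagGen Γ s)⁻¹ * raagGen Γ v * raagGen Γ s = raagGen Γ v
          rw [mul_assoc, hc.eq, ← mul_assoc, inv_mul_cancel, one_mul])
        rw [he]
      | (m+1), ih, hd' =>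
        obtain ⟨p, hp⟩ := hconn.exists_walk_length_eq_dist v s
        match p, hp with
        | .nil, hp => rw [hd'] at hp; simp at hp
        | .cons (v := w) hvw q, hp =>
          have hq : Γ.dist w s ≤ m + 1 := by
            have h1 := SimpleGraph.dist_le q
            simp only [SimpleGraph.Walk.length_cons] at hp
            omega
          have r1 := ih w s hq
          have e1 : (extGraph Γ).Adj (ev Γ v (raagGen Γ s)) (ev Γ w (raagGen Γ s)) :=
            ev_adj Γ hvw _
          have e2 : (extGraph Γ).Adj (evo Γ w) (evo Γ v) := evo_adj Γ hvw.symm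
          exact (e1.reachable.trans r1).trans e2.reachable

/-- Every vertex `v^g` of the extension graph is connected to the base vertex `v`. -/
lemma reach_to_base (hconn : Γ.Connected) (g : Raag Γ) (v : V) :
    (extGraph Γ).Reachable (ev Γ v g) (evo Γ v) := by
  have Pinv : ∀ a : Raag Γ, (∀ v, (extGraph Γ).Reachable (ev Γ v a) (evo Γ v)) →
      ∀ v, (extGraph Γ).Reachable (ev Γ v a⁻¹) (evo Γ v) := by
    intro a ha v
    have h1 := ((ha v).map (conjHom Γ a⁻¹)).symm
    have e1 : conjHom Γ a⁻¹ (ev Γ v a) = evo Γ v := Subtype.ext (by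
      rw [conjHom_val]; show a⁻¹⁻¹ * (a⁻¹ * raagGen Γ v * a) * a⁻¹ = raagGen Γ v; group)
    have e2 : conjHom Γ a⁻¹ (evo Γ v) = ev Γ v a⁻¹ := Subtype.ext (by
      rw [conjHom_val]; rfl)
    rwa [e1, e2] at h1
  have Pmul : ∀ a b : Raag Γ, (∀ v, (extGraph Γ).Reachable (ev Γ v a) (evo Γ v)) →
      (∀ v, (extGraph Γ).Reachable (ev Γ v b) (evo Γ v)) →
      ∀ v, (extGraph Γ).Reachable (ev Γ v (a * b)) (evo Γ v) := by
    intro a b ha hb v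
    have h1 := (ha v).map (conjHom Γ b)
    have e1 : conjHom Γ b (ev Γ v a) = ev Γ v (a * b) := Subtype.ext (by
      rw [conjHom_val]
      show b⁻¹ * (a⁻¹ * raagGen Γ v * a) * b = (a*b)⁻¹ * raagGen Γ v * (a*b)
      group)
    have e2 : conjHom Γ b (evo Γ v) = ev Γ v b := Subtype.ext (by
      rw [conjHom_val]; rfl)
    rw [e1, e2] at h1
    exact h1.trans (hb v)
  suffices H : ∀ w : FreeGroup V, ∀ v,
      (extGraph Γ).Reachable (ev Γ v (PresentedGroup.mk (raagRels Γ) w)) (evo Γ v) by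
    obtain ⟨w, rfl⟩ := PresentedGroup.mk_surjective (raagRels Γ) g
    exact H w v
  intro w
  induction w using FreeGroup.induction_on with
  | C1 =>
    intro v
    rw [map_one]
    have he : ev Γ v 1 = evo Γ v := Subtype.ext (by simp [ev, evo])
    rw [he]
  | of x =>
    intro v
    have he : (PresentedGroup.mk (raagRels Γ)) (FreeGroup.of x) = raagGen Γ x := rfl
    rw [he]
    exact reach_single Γ hconn (Γ.dist v x) v x le_rfl
  | inv_of x ihx =>
    intro v
    rw [map_inv]
    exact Pinv _ ihx v
  | mul x y ihx ihy =>
    intro v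
    rw [map_mul]
    exact Pmul _ _ ihx ihy v

/-- The projection of a vertex of the extension graph to a vertex of `Γ`. -/
noncomputable def fV (a : extVerts Γ) : V := a.2.choose

lemma fV_spec (a : extVerts Γ) :
    ∃ g : Raag Γ, (a : Raag Γ) = g⁻¹ * raagGen Γ (fV Γ a) * g := a.2.choose_spec

lemma fV_ev (v : V) (g : Raag Γ) : fV Γ (ev Γ v g) = v := by
  obtain ⟨k, hk⟩ := fV_spec Γ (ev Γ v g)
  exact (conj_gen_inj Γ ((show ((ev Γ v g : extVerts Γ) : Raag Γ)
    = g⁻¹ * raagGen Γ v * g from rfl) ▸ hk : g⁻¹ * raagGen Γ v * g = _)).symm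

/-- The projection maps edges of the extension graph to edges or vertices of `Γ`. -/
lemma ext_adj_proj {a b : extVerts Γ} (h : (extGraph Γ).Adj a b) :
    fV Γ a = fV Γ b ∨ Γ.Adj (fV Γ a) (fV Γ b) := by
  by_cases heq : fV Γ a = fV Γ b
  · exact Or.inl heq
  · obtain ⟨k1, hk1⟩ := fV_spec Γ a
    obtain ⟨k2, hk2⟩ := fV_spec Γ b
    exact Or.inr (adj_of_commute_conj Γ heq (hk1 ▸ hk2 ▸ h.2))

/-- Projecting a walk in the extension graph gives a walk in `Γ` of at most the same length. -/
lemma exists_walk_proj {a b : extVerts Γ} (p : (extGraph Γ).Walk a b) :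
    ∃ q : Γ.Walk (fV Γ a) (fV Γ b), q.length ≤ p.length := by
  induction p with
  | nil => exact ⟨SimpleGraph.Walk.nil, le_rfl⟩
  | cons hadj p ih =>
    obtain ⟨q, hq⟩ := ih
    rcases ext_adj_proj Γ hadj with heq | hAdj
    · exact ⟨q.copy heq.symm rfl, by
        rw [SimpleGraph.Walk.length_copy, SimpleGraph.Walk.length_cons]; omega⟩
    · exact ⟨SimpleGraph.Walk.cons hAdj q, by
        rw [SimpleGraph.Walk.length_cons, SimpleGraph.Walk.length_cons]; omega⟩

end lemmas

/-- For a finite connected graph `Γ` viewed inside its extension graph `Γ^e`, the distance in `Γ`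
between vertices `x` and `y` is at most the distance in `Γ^e` between any conjugates `x^g` and
`y^h`; in particular distances within `Γ ⊆ Γ^e` agree with those of `Γ`, so a geodesic lying in
`Γ` is a geodesic of `Γ^e`. -/
theorem stmt17 {V : Type*} [Fintype V] (Γ : SimpleGraph V) (hconn : Γ.Connected)
    (x y : V) (g h : Raag Γ) :
    Γ.dist x y ≤
        (extGraph Γ).dist ⟨g⁻¹ * raagGen Γ x * g, ⟨x, g, rfl⟩⟩
          ⟨h⁻¹ * raagGen Γ y * h, ⟨y, h, rfl⟩⟩ ∧
      Γ.dist x y =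
        (extGraph Γ).dist ⟨raagGen Γ x, ⟨x, 1, by simp⟩⟩ ⟨raagGen Γ y, ⟨y, 1, by simp⟩⟩ := by
  have hXY : (extGraph Γ).Reachable (evo Γ x) (evo Γ y) := by
    obtain ⟨p, -⟩ := hconn.exists_walk_length_eq_dist x y
    induction p with
    | nil => exact SimpleGraph.Reachable.refl _
    | cons hadj p ih => exact (evo_adj Γ hadj).reachable.trans ih
  have key : ∀ g h : Raag Γ, Γ.dist x y ≤ (extGraph Γ).dist (ev Γ x g) (ev Γ y h) := by
    intro g h
    have hreach : (extGraph Γ).Reachable (ev Γ x g) (ev Γ y h) :=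
      ((reach_to_base Γ hconn g x).trans hXY).trans (reach_to_base Γ hconn h y).symm
    obtain ⟨p, hp⟩ := hreach.exists_walk_length_eq_dist
    obtain ⟨q, hq⟩ := exists_walk_proj Γ p
    have hd : Γ.dist (fV Γ (ev Γ x g)) (fV Γ (ev Γ y h)) ≤ q.length := SimpleGraph.dist_le q
    have he : Γ.dist x y = Γ.dist (fV Γ (ev Γ x g)) (fV Γ (ev Γ y h)) := by
      rw [fV_ev, fV_ev]
    omega
  have lift_walk : ∀ {u w : V} (p : Γ.Walk u w),
      ∃ q : (extGraph Γ).Walk (evo Γ u) (evo Γ w), q.length = p.length := by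
    intro u w p
    induction p with
    | nil => exact ⟨.nil, rfl⟩
    | cons hadj p ih =>
      obtain ⟨q, hq⟩ := ih
      exact ⟨.cons (evo_adj Γ hadj) q, by simp [hq]⟩
  have hle2 : (extGraph Γ).dist (evo Γ x) (evo Γ y) ≤ Γ.dist x y := by
    obtain ⟨p, hp⟩ := hconn.exists_walk_length_eq_dist x y
    obtain ⟨q, hq⟩ := lift_walk p
    calc (extGraph Γ).dist (evo Γ x) (evo Γ y) ≤ q.length := SimpleGraph.dist_le q
      _ = p.length := hq
      _ = Γ.dist x y := hp
  have hev1 : ev Γ x 1 = evo Γ x := Subtype.ext (by simp [ev, evo])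
  have hev2 : ev Γ y 1 = evo Γ y := Subtype.ext (by simp [ev, evo])
  have k11 := key 1 1
  rw [hev1, hev2] at k11
  exact ⟨key g h, le_antisymm k11 hle2⟩
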